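/- Let m ≥ 1 be an integer. For l ∈ ℤ_{≥0} define A_l : ℤ_{≥0} → ℤ_{≥0} by A_l(0) = 1, A_l(p) = 2 for 1 ≤ p ≤ l, and A_l(p) = 0 for p > l. Let M and M' be finitely supported functions ℤ_{≥0} → ℤ_{≥0}, each satisfying the residual condition for m, and let L and L' be finite multisets of nonnegative integers such that M + Σ_{l ∈ L} A_l = M' + Σ_{l ∈ L'} A_l pointwise. Then M = M' and L = L' (as multisets). In other words, a finitely supported function on ℤ_{≥0} admits at most one decomposition into a residual multiplicity function plus a multiset of the 'A-type' sequences (l, l, l−1, l−1, …, 1, 1, 0). -/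

import Mathlib

open scoped Classical

/-- The `A`-type multiplicity sequence: `A_l(0) = 1`, `A_l(p) = 2` for
`1 ≤ p ≤ l`, and `A_l(p) = 0` for `p > l`. -/
def Aseq (l p : ℕ) : ℕ :=
  if p = 0 then 1 else if p ≤ l then 2 else 0

/-- The residual condition for an integer `m ≥ 1` on a multiplicity function
`M : ℕ → ℕ`: `M_l - M_{l+1} ∈ {0,1}` for `l ≥ m`, `M_{l+1} - M_l ∈ {0,1}` for
`1 ≤ l ≤ m - 1`, and `M_0 = ⌊M_1/2⌋`. -/
def ResidualCond (M : ℕ → ℕ) (m : ℕ) : Prop :=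
  (∀ l, m ≤ l → M (l + 1) ≤ M l ∧ M l ≤ M (l + 1) + 1) ∧
  (∀ l, 1 ≤ l → l + 1 ≤ m → M l ≤ M (l + 1) ∧ M (l + 1) ≤ M l + 1) ∧
  M 0 = M 1 / 2

lemma sum_map_ite (p : ℕ) (L : Multiset ℕ) :
    (L.map fun l => if p ≤ l then 2 else 0).sum
      = 2 * (L.filter fun l => p ≤ l).card := by
  induction L using Multiset.induction with
  | empty => simp
  | cons a s ih =>
    by_cases h : p ≤ a <;>
      simp [h, ih, Multiset.filter_cons, mul_add] <;> omega

lemma card_filter_split (l : ℕ) (L : Multiset ℕ) :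
    (L.filter fun x => l ≤ x).card
      = L.count l + (L.filter fun x => l + 1 ≤ x).card := by
  induction L using Multiset.induction with
  | empty => simp
  | cons a s ih =>
    rcases lt_trichotomy a l with h | h | h
    · have h1 : ¬ l ≤ a := by omega
      have h2 : ¬ l + 1 ≤ a := by omega
      have h3 : l ≠ a := by omega
      simp [Multiset.filter_cons, Multiset.count_cons, h1, h2, h3, ih]
      omega
    · subst h
      have h2 : ¬ a + 1 ≤ a := by omega
      simp [Multiset.filter_cons, Multiset.count_cons, h2, ih]
      omega
    · have h1 : l ≤ a := by omega
      have h2 : l + 1 ≤ a := by omega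
      have h3 : l ≠ a := by omega
      simp [Multiset.filter_cons, Multiset.count_cons, h1, h2, h3, h, ih]
      simp only [Nat.lt_iff_add_one_le] at *
      omega

lemma Aseq_sum_pos (p : ℕ) (hp : 1 ≤ p) (L : Multiset ℕ) :
    (L.map fun l => Aseq l p).sum = 2 * (L.filter fun l => p ≤ l).card := by
  have : (fun l => Aseq l p) = fun l => if p ≤ l then 2 else 0 := by
    funext l; simp [Aseq]; omega
  rw [this, sum_map_ite]

lemma Aseq_sum_zero (L : Multiset ℕ) :
    (L.map fun l => Aseq l 0).sum = L.card := by
  simp [Aseq]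

lemma resid_eq (m : ℕ) (hm : 1 ≤ m) (M M' : ℕ → ℕ)
    (hM : ResidualCond M m) (hM' : ResidualCond M' m)
    (N : ℕ) (hN : ∀ p, N ≤ p → M p = 0 ∧ M' p = 0)
    (hpar : ∀ p, 1 ≤ p → M p % 2 = M' p % 2) : ∀ p, M p = M' p := by
  obtain ⟨hd, hu, h0⟩ := hM
  obtain ⟨hd', hu', h0'⟩ := hM'
  have high : ∀ d p, m ≤ p → N ≤ p + d → M p = M' p := by
    intro d
    induction d with
    | zero =>
      intro p hp hNp
      have := hN p (by omega); omega
    | succ d ih =>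
      intro p hp hNp
      by_cases h : N ≤ p + d
      · exact ih p hp h
      · have h1 := ih (p + 1) (by omega) (by omega)
        have h2 := hd p hp
        have h3 := hd' p hp
        have h4 := hpar p (by omega)
        omega
  have key : ∀ p, 1 ≤ p → M p = M' p := by
    intro p hp
    rcases le_or_gt m p with h | h
    · exact high N p h (by omega)
    · have aux : ∀ d q, 1 ≤ q → m ≤ q + d → M q = M' q := by
        intro d
        induction d with
        | zero => intro q hq hmq; exact high N q hmq (by omega)
        | succ d ih =>
          intro q hq hmq
          by_cases hc : m ≤ q + d
          · exact ih q hq hc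
          · have h1 := ih (q + 1) (by omega) (by omega)
            have h2 := hu q hq (by omega)
            have h3 := hu' q hq (by omega)
            have h4 := hpar q hq
            omega
      exact aux m p hp (by omega)
  intro p
  cases p with
  | zero => have := key 1 le_rfl; omega
  | succ n => exact key (n + 1) (by omega)

/-- for an integer `m ≥ 1`, a finitely supported function on
`ℤ_{≥0}` admits at most one decomposition into a residual multiplicity
function plus a multiset of `A`-type sequences. -/
theorem stmt10 (m : ℕ) (hm : 1 ≤ m) (M M' : ℕ → ℕ)
    (hMfin : ∃ N, ∀ p, N ≤ p → M p = 0) (hM'fin : ∃ N, ∀ p, N ≤ p → M' p = 0)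
    (hM : ResidualCond M m) (hM' : ResidualCond M' m)
    (L L' : Multiset ℕ)
    (heq : ∀ p, M p + (L.map fun l => Aseq l p).sum
              = M' p + (L'.map fun l => Aseq l p).sum) :
    M = M' ∧ L = L' := by
  obtain ⟨N1, h1⟩ := hMfin
  obtain ⟨N2, h2⟩ := hM'fin
  have hpar : ∀ p, 1 ≤ p → M p % 2 = M' p % 2 := by
    intro p hp
    have h := heq p
    rw [Aseq_sum_pos p hp L, Aseq_sum_pos p hp L'] at h
    omega
  have hMM' : ∀ p, M p = M' p :=
    resid_eq m hm M M' hM hM' (N1 + N2)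
      (fun p hp => ⟨h1 p (by omega), h2 p (by omega)⟩) hpar
  have hS : ∀ p, (L.map fun l => Aseq l p).sum = (L'.map fun l => Aseq l p).sum := by
    intro p
    have h := heq p
    have := hMM' p
    omega
  refine ⟨funext hMM', ?_⟩
  have hcard : L.card = L'.card := by
    have h := hS 0
    rwa [Aseq_sum_zero, Aseq_sum_zero] at h
  have hfil : ∀ p, 1 ≤ p →
      (L.filter fun l => p ≤ l).card = (L'.filter fun l => p ≤ l).card := by
    intro p hp
    have h := hS p
    rw [Aseq_sum_pos p hp L, Aseq_sum_pos p hp L'] at h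
    omega
  ext l
  rcases Nat.eq_zero_or_pos l with rfl | hl
  · have ha := card_filter_split 0 L
    have hb := card_filter_split 0 L'
    have hc : (L.filter fun x => 0 ≤ x).card = L.card := by
      rw [Multiset.filter_eq_self.mpr (fun a _ => Nat.zero_le a)]
    have hd : (L'.filter fun x => 0 ≤ x).card = L'.card := by
      rw [Multiset.filter_eq_self.mpr (fun a _ => Nat.zero_le a)]
    have he := hfil 1 le_rfl
    simp only [Nat.zero_add] at ha hb
    omega
  · have ha := card_filter_split l L
    have hb := card_filter_split l L'
    have hc := hfil l hl
    have hd := hfil (l + 1) (by omega)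
    omega
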